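/- For each k = 1, …, n−1, the partial derivative of H̃_{k+1} with respect to t_k equals tr(A_k A_{k+1})/(t_k − t_{k+1})². -/

import Mathlib

open Finset

noncomputable section

/-- Extend `t = (t₁, …, tₙ) : Fin n → ℂ` by the fixed points `t_{n+1} = 0` and
`t_{n+2} = 1` (0-based: indices `n` and `n+1` of `Fin (n+2)`). -/
def ext (n : ℕ) (t : Fin n → ℂ) (j : Fin (n + 2)) : ℂ :=
  if h : (j : ℕ) < n then t ⟨j, h⟩ else if (j : ℕ) = n then 0 else 1

/-- Inclusion of indices `1, …, n` into `1, …, n+2` (0-based). -/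
def inc (n : ℕ) : Fin n → Fin (n + 2) := Fin.castLE (by omega)

/-- The partial derivative `∂f/∂t_i` of a scalar function on `ℂⁿ`. -/
def pderiv (n : ℕ) (i : Fin n) (f : (Fin n → ℂ) → ℂ) (t : Fin n → ℂ) : ℂ :=
  fderiv ℂ f t (Pi.single i 1)

/-- `ρ = −(θ₁ + ⋯ + θ_{n+3})/2`. -/
def rho (n : ℕ) (θ : Fin (n + 3) → ℂ) : ℂ := -(∑ j, θ j) / 2

/-- The constants `C_{ij} = −θ_iθ_j/2 + (θ_i² + θ_j²)/(2(n+1))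
− (Σ_k θ_k²)/(2(n+1)(n+2))`. -/
def Cc (n : ℕ) (θ : Fin (n + 3) → ℂ) (i j : Fin (n + 2)) : ℂ :=
  -(θ (Fin.castSucc i) * θ (Fin.castSucc j)) / 2
    + (θ (Fin.castSucc i) ^ 2 + θ (Fin.castSucc j) ^ 2) / (2 * ((n : ℂ) + 1))
    - (∑ k, θ k ^ 2) / (2 * ((n : ℂ) + 1) * ((n : ℂ) + 2))

/-- `H̃_i = Σ_{1 ≤ j ≤ n+2, j ≠ i} tr(A_i A_j)/(t_i − t_j)`. -/
def Htil (n : ℕ) (A : Fin (n + 2) → (Fin n → ℂ) → Matrix (Fin 2) (Fin 2) ℂ)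
    (i : Fin n) (t : Fin n → ℂ) : ℂ :=
  ∑ j ∈ Finset.univ.filter (fun j => j ≠ inc n i),
    (A (inc n i) t * A j t).trace / (t i - ext n t j)

lemma trace_mul_expand (M N : Matrix (Fin 2) (Fin 2) ℂ) :
    (M * N).trace = ∑ p : Fin 2, ∑ q : Fin 2, M p q * N q p := by
  simp [Matrix.trace, Matrix.diag, Matrix.mul_apply]

lemma tr_id1 (X Y : Matrix (Fin 2) (Fin 2) ℂ) : ((X*Y - Y*X)*X).trace = 0 := by
  simp [Matrix.trace, Matrix.diag, Matrix.mul_apply, Fin.sum_univ_two, Matrix.sub_apply]; ring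

lemma tr_id2 (X Y Z : Matrix (Fin 2) (Fin 2) ℂ) :
    (Y*(X*Z - Z*X)).trace = -(((X*Y - Y*X)*Z).trace) := by
  simp [Matrix.trace, Matrix.diag, Matrix.mul_apply, Fin.sum_univ_two, Matrix.sub_apply]; ring

lemma tr_id3 (X Y Z : Matrix (Fin 2) (Fin 2) ℂ) :
    (Y*(Z*X - X*Z)).trace = ((X*Y - Y*X)*Z).trace := by
  simp [Matrix.trace, Matrix.diag, Matrix.mul_apply, Fin.sum_univ_two, Matrix.sub_apply]; ring

lemma tr_id4 (X Y : Matrix (Fin 2) (Fin 2) ℂ) : (Y*(Y*X - X*Y)).trace = 0 := by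
  simp [Matrix.trace, Matrix.diag, Matrix.mul_apply, Fin.sum_univ_two, Matrix.sub_apply]; ring

lemma fderiv_div_apply' {n : ℕ} {f g : (Fin n → ℂ) → ℂ} {t : Fin n → ℂ}
    (hf : DifferentiableAt ℂ f t) (hg : DifferentiableAt ℂ g t) (h0 : g t ≠ 0)
    (v : Fin n → ℂ) :
    fderiv ℂ (fun s => f s / g s) t v
      = (fderiv ℂ f t v * g t - f t * fderiv ℂ g t v) / g t ^ 2 := by
  have hinv : HasFDerivAt (fun s => (g s)⁻¹)
      ((-(ContinuousLinearMap.mulLeftRight ℂ ℂ (g t)⁻¹ (g t)⁻¹)).comp (fderiv ℂ g t)) t :=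
    (hasFDerivAt_inv' h0).comp t hg.hasFDerivAt
  have hd : (fun s => f s / g s) = fun s => f s * (g s)⁻¹ := by
    funext s; rw [div_eq_mul_inv]
  rw [hd, fderiv_fun_mul hf hinv.differentiableAt]
  rw [ContinuousLinearMap.add_apply, ContinuousLinearMap.smul_apply,
    ContinuousLinearMap.smul_apply, hinv.fderiv]
  simp only [ContinuousLinearMap.comp_apply, ContinuousLinearMap.neg_apply,
    ContinuousLinearMap.mulLeftRight_apply, smul_eq_mul]
  field_simp
  ring

/-- For each `k = 1, …, n−1`, `∂H̃_{k+1}/∂t_k = tr(A_k A_{k+1})/(t_k − t_{k+1})²`. -/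
theorem pderiv_Htil_succ
    (n : ℕ) (hn : 2 ≤ n) (θ : Fin (n + 3) → ℂ)
    (U : Set (Fin n → ℂ)) (hU : IsOpen U)
    (A : Fin (n + 2) → (Fin n → ℂ) → Matrix (Fin 2) (Fin 2) ℂ)
    (hdist : ∀ t ∈ U, ∀ j k : Fin (n + 2), j ≠ k → ext n t j ≠ ext n t k)
    (hHol : ∀ (j : Fin (n + 2)) (k l : Fin 2),
      DifferentiableOn ℂ (fun s => A j s k l) U)
    (hdet : ∀ t ∈ U, ∀ j, (A j t).det = 0)
    (htr : ∀ t ∈ U, ∀ j : Fin (n + 2), (A j t).trace = θ (Fin.castSucc j))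
    (hsum : ∀ t ∈ U, ∑ j, A j t =
      -Matrix.diagonal ![rho n θ, rho n θ + θ (Fin.last (n + 2))])
    (hSch1 : ∀ t ∈ U, ∀ (i : Fin n) (j : Fin (n + 2)), j ≠ inc n i →
      ∀ (k l : Fin 2),
        pderiv n i (fun s => A j s k l) t
          = ((t i - ext n t j)⁻¹ •
              (A (inc n i) t * A j t - A j t * A (inc n i) t)) k l)
    (hSch2 : ∀ t ∈ U, ∀ (i : Fin n) (k l : Fin 2),
      pderiv n i (fun s => A (inc n i) s k l) t
        = ∑ j ∈ Finset.univ.filter (fun j => j ≠ inc n i),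
            ((t i - ext n t j)⁻¹ •
              (A j t * A (inc n i) t - A (inc n i) t * A j t)) k l)
    :
    ∀ t ∈ U, ∀ (k : Fin n) (h : (k : ℕ) + 1 < n),
      pderiv n k (fun s => Htil n A ⟨(k : ℕ) + 1, h⟩ s) t
        = (A (inc n k) t * A (inc n ⟨(k : ℕ) + 1, h⟩) t).trace
            / (t k - t ⟨(k : ℕ) + 1, h⟩) ^ 2 := by
  intro t ht k hk1
  simp only [Htil]
  set m : Fin n := ⟨(k:ℕ)+1, hk1⟩ with hm
  set kk : Fin (n+2) := inc n k with hkk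
  set km : Fin (n+2) := inc n m with hkm
  have hco_kk : ((kk:ℕ)) = (k:ℕ) := rfl
  have hco_km : ((km:ℕ)) = (k:ℕ)+1 := rfl
  have hne : kk ≠ km := by
    intro h; apply absurd (congrArg (Fin.val) h); simp [hco_kk, hco_km]
  have hmk : m ≠ k := by
    intro h; apply absurd (congrArg (Fin.val) h); simp [hm]
  have ekk : ∀ s : Fin n → ℂ, ext n s kk = s k := by
    intro s
    have h1 : ((kk:ℕ)) < n := k.isLt
    exact (dif_pos h1).trans (congrArg s (Fin.ext rfl))
  have ekm : ∀ s : Fin n → ℂ, ext n s km = s m := by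
    intro s
    have h1 : ((km:ℕ)) < n := m.isLt
    exact (dif_pos h1).trans (congrArg s (Fin.ext rfl))
  -- distinctness
  have hab : t k - t m ≠ 0 := by
    have := hdist t ht kk km hne
    rw [ekk, ekm] at this
    exact sub_ne_zero_of_ne this
  have haj : ∀ j, j ≠ kk → t k - ext n t j ≠ 0 := by
    intro j hj
    have := hdist t ht kk j (fun e => hj e.symm)
    rw [ekk] at this
    exact sub_ne_zero_of_ne this
  have hbj : ∀ j, j ≠ km → t m - ext n t j ≠ 0 := by
    intro j hj
    have := hdist t ht km j (fun e => hj e.symm)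
    rw [ekm] at this
    exact sub_ne_zero_of_ne this
  -- differentiability of entries
  have hA : ∀ (j : Fin (n+2)) (p q : Fin 2), DifferentiableAt ℂ (fun s => A j s p q) t :=
    fun j p q => (hHol j p q).differentiableAt (hU.mem_nhds ht)
  -- ext functions
  have hE : ∀ j : Fin (n+2), DifferentiableAt ℂ (fun s : Fin n → ℂ => ext n s j) t ∧
      fderiv ℂ (fun s : Fin n → ℂ => ext n s j) t (Pi.single k 1)
        = if j = kk then 1 else 0 := by
    intro j
    by_cases hj : (j:ℕ) < n
    · have heq : (fun s : Fin n → ℂ => ext n s j) = fun s => s ⟨j, hj⟩ :=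
        funext fun s => dif_pos hj
      have hcl : HasFDerivAt (fun s : Fin n → ℂ => s ⟨j, hj⟩)
          (ContinuousLinearMap.proj (R := ℂ) (φ := fun _ : Fin n => ℂ) ⟨j, hj⟩) t :=
        (ContinuousLinearMap.proj (R := ℂ) (φ := fun _ : Fin n => ℂ)
          ⟨j, hj⟩).hasFDerivAt (x := t)
      rw [heq]
      refine ⟨hcl.differentiableAt, ?_⟩
      rw [hcl.fderiv]
      have : (⟨(j:ℕ), hj⟩ : Fin n) = k ↔ j = kk := by
        constructor
        · intro h; exact Fin.ext ((congrArg Fin.val h).trans hco_kk.symm)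
        · intro h; exact Fin.ext ((congrArg Fin.val h).trans hco_kk)
      simp [Pi.single_apply, this]
    · have heq : (fun s : Fin n → ℂ => ext n s j)
          = fun _ => (if (j:ℕ) = n then (0:ℂ) else 1) := funext fun s => dif_neg hj
      rw [heq]
      refine ⟨differentiableAt_const _, ?_⟩
      rw [fderiv_fun_const]
      have : j ≠ kk := by
        intro h; exact hj (by rw [show (j:ℕ) = (kk:ℕ) from congrArg Fin.val h, hco_kk]; exact k.isLt)
      simp [this]
  -- s ↦ s m
  have hsmF : HasFDerivAt (fun s : Fin n → ℂ => s m)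
      (ContinuousLinearMap.proj (R := ℂ) (φ := fun _ : Fin n => ℂ) m) t :=
    (ContinuousLinearMap.proj (R := ℂ) (φ := fun _ : Fin n => ℂ) m).hasFDerivAt (x := t)
  have hsm : DifferentiableAt ℂ (fun s : Fin n → ℂ => s m) t := hsmF.differentiableAt
  have hsmv : fderiv ℂ (fun s : Fin n → ℂ => s m) t (Pi.single k 1) = 0 := by
    rw [hsmF.fderiv]
    simp [Pi.single_apply, hmk]
  -- denominators
  have hDend : ∀ j, DifferentiableAt ℂ (fun s : Fin n → ℂ => s m - ext n s j) t :=
    fun j => hsm.sub (hE j).1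
  have hDenv : ∀ j, fderiv ℂ (fun s : Fin n → ℂ => s m - ext n s j) t (Pi.single k 1)
      = -(if j = kk then 1 else 0) := by
    intro j
    rw [fderiv_fun_sub hsm (hE j).1, ContinuousLinearMap.sub_apply, hsmv, (hE j).2]
    ring
  -- numerators
  have hkm_ne_kk : km ≠ kk := fun e => hne e.symm
  have hNd : ∀ j, DifferentiableAt ℂ (fun s => (A km s * A j s).trace) t := by
    intro j
    have heq : (fun s => (A km s * A j s).trace)
        = fun s => ∑ p : Fin 2, ∑ q : Fin 2, A km s p q * A j s q p :=
      funext fun s => trace_mul_expand _ _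
    rw [heq]
    exact DifferentiableAt.fun_sum fun p _ =>
      DifferentiableAt.fun_sum fun q _ => (hA km p q).mul (hA j q p)
  have hNv : ∀ j, fderiv ℂ (fun s => (A km s * A j s).trace) t (Pi.single k 1)
      = ∑ p : Fin 2, ∑ q : Fin 2,
          (A km t p q * pderiv n k (fun s => A j s q p) t
            + A j t q p * pderiv n k (fun s => A km s p q) t) := by
    intro j
    have heq : (fun s => (A km s * A j s).trace)
        = fun s => ∑ p : Fin 2, ∑ q : Fin 2, A km s p q * A j s q p :=
      funext fun s => trace_mul_expand _ _
    rw [heq, fderiv_fun_sum fun p _ =>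
      DifferentiableAt.fun_sum fun q _ => (hA km p q).fun_mul (hA j q p),
      ContinuousLinearMap.sum_apply]
    refine Finset.sum_congr rfl fun p _ => ?_
    rw [fderiv_fun_sum fun q _ => (hA km p q).fun_mul (hA j q p), ContinuousLinearMap.sum_apply]
    refine Finset.sum_congr rfl fun q _ => ?_
    rw [fderiv_fun_mul (hA km p q) (hA j q p), ContinuousLinearMap.add_apply,
      ContinuousLinearMap.smul_apply, ContinuousLinearMap.smul_apply]
    simp only [smul_eq_mul, pderiv]
  -- derivative matrices
  have hDY : ∀ p q : Fin 2, pderiv n k (fun s => A km s p q) t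
      = ((t k - t m)⁻¹ • (A kk t * A km t - A km t * A kk t)) p q := by
    intro p q
    have := hSch1 t ht k km hkm_ne_kk p q
    rwa [ekm] at this
  have hDZ : ∀ j, j ≠ kk → ∀ p q : Fin 2, pderiv n k (fun s => A j s p q) t
      = ((t k - ext n t j)⁻¹ • (A kk t * A j t - A j t * A kk t)) p q :=
    fun j hj p q => hSch1 t ht k j hj p q
  set Dkk : Matrix (Fin 2) (Fin 2) ℂ :=
    ∑ j ∈ Finset.univ.filter (fun j => j ≠ kk),
      (t k - ext n t j)⁻¹ • (A j t * A kk t - A kk t * A j t) with hDkkdef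
  have hDX : ∀ p q : Fin 2, pderiv n k (fun s => A kk s p q) t = Dkk p q := by
    intro p q
    rw [hSch2 t ht k p q, hDkkdef]
    rw [Matrix.sum_apply]
  -- trace forms of numerator derivatives
  have hNkk : fderiv ℂ (fun s => (A km s * A kk s).trace) t (Pi.single k 1)
      = (A km t * Dkk).trace := by
    rw [hNv kk, trace_mul_expand (A km t) Dkk]
    calc ∑ p : Fin 2, ∑ q : Fin 2, (A km t p q * pderiv n k (fun s => A kk s q p) t
            + A kk t q p * pderiv n k (fun s => A km s p q) t)
        = ∑ p : Fin 2, ∑ q : Fin 2, (A km t p q * Dkk q p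
            + (t k - t m)⁻¹ * ((A kk t * A km t - A km t * A kk t) p q * A kk t q p)) := by
          refine Finset.sum_congr rfl fun p _ => Finset.sum_congr rfl fun q _ => ?_
          rw [hDX q p, hDY p q]
          simp only [Matrix.smul_apply, smul_eq_mul]
          ring
      _ = (∑ p : Fin 2, ∑ q : Fin 2, A km t p q * Dkk q p)
            + (t k - t m)⁻¹ * ∑ p : Fin 2, ∑ q : Fin 2,
                ((A kk t * A km t - A km t * A kk t) p q * A kk t q p) := by
          rw [Finset.mul_sum, ← Finset.sum_add_distrib]
          refine Finset.sum_congr rfl fun p _ => ?_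
          rw [Finset.mul_sum, ← Finset.sum_add_distrib]
      _ = ∑ p : Fin 2, ∑ q : Fin 2, A km t p q * Dkk q p := by
          rw [← trace_mul_expand (A kk t * A km t - A km t * A kk t) (A kk t),
            tr_id1, mul_zero, add_zero]
  have hNj : ∀ j, j ≠ kk → fderiv ℂ (fun s => (A km s * A j s).trace) t (Pi.single k 1)
      = (t k - ext n t j)⁻¹ * (A km t * (A kk t * A j t - A j t * A kk t)).trace
        + (t k - t m)⁻¹ * ((A kk t * A km t - A km t * A kk t) * A j t).trace := by
    intro j hjkk
    rw [hNv j, trace_mul_expand (A km t) (A kk t * A j t - A j t * A kk t),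
      trace_mul_expand (A kk t * A km t - A km t * A kk t) (A j t)]
    rw [Finset.mul_sum, Finset.mul_sum, ← Finset.sum_add_distrib]
    refine Finset.sum_congr rfl fun p _ => ?_
    rw [Finset.mul_sum, Finset.mul_sum, ← Finset.sum_add_distrib]
    refine Finset.sum_congr rfl fun q _ => ?_
    rw [hDZ j hjkk q p, hDY p q]
    simp only [Matrix.smul_apply, smul_eq_mul]
    ring
  -- assemble
  have hba : t m - t k ≠ 0 := fun e => hab (by rw [← neg_sub, e, neg_zero])
  set S2 := (Finset.univ.filter (fun j : Fin (n+2) => j ≠ km)).erase kk with hS2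
  have hS2mem : ∀ j ∈ S2, j ≠ kk ∧ j ≠ km := by
    intro j hj
    rw [hS2, Finset.mem_erase, Finset.mem_filter] at hj
    exact ⟨hj.1, hj.2.2⟩
  have hYDkk : (A km t * Dkk).trace
      = ∑ j ∈ S2, (t k - ext n t j)⁻¹
          * (A km t * (A j t * A kk t - A kk t * A j t)).trace := by
    rw [hDkkdef, Matrix.mul_sum, Matrix.trace_sum]
    rw [Finset.sum_congr rfl (fun j (_ : j ∈ Finset.univ.filter (fun j => j ≠ kk)) => by
      rw [Matrix.mul_smul, Matrix.trace_smul, smul_eq_mul] :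
      ∀ j ∈ Finset.univ.filter (fun j => j ≠ kk),
        (A km t * ((t k - ext n t j)⁻¹ • (A j t * A kk t - A kk t * A j t))).trace
          = (t k - ext n t j)⁻¹ * (A km t * (A j t * A kk t - A kk t * A j t)).trace)]
    have hkmF' : km ∈ Finset.univ.filter (fun j : Fin (n+2) => j ≠ kk) := by
      simp [hkm_ne_kk]
    rw [← Finset.add_sum_erase _ _ hkmF', ekm, tr_id4 (A kk t) (A km t), mul_zero, zero_add]
    refine Finset.sum_congr ?_ fun _ _ => rfl
    ext j
    simp only [Finset.mem_erase, Finset.mem_filter, Finset.mem_univ, true_and, hS2]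
    tauto
  -- step 1: differentiate the sum
  have hdiv : ∀ j ∈ Finset.univ.filter (fun j : Fin (n+2) => j ≠ km),
      DifferentiableAt ℂ (fun s => (A km s * A j s).trace / (s m - ext n s j)) t := by
    intro j hj
    have heq : (fun s => (A km s * A j s).trace / (s m - ext n s j))
        = fun s => (A km s * A j s).trace * (s m - ext n s j)⁻¹ :=
      funext fun s => div_eq_mul_inv _ _
    rw [heq]
    exact (hNd j).mul ((hDend j).inv (hbj j (Finset.mem_filter.mp hj).2))
  rw [pderiv, fderiv_fun_sum hdiv, ContinuousLinearMap.sum_apply]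
  have hstep : ∀ j ∈ Finset.univ.filter (fun j : Fin (n+2) => j ≠ km),
      fderiv ℂ (fun s => (A km s * A j s).trace / (s m - ext n s j)) t (Pi.single k 1)
        = (fderiv ℂ (fun s => (A km s * A j s).trace) t (Pi.single k 1) * (t m - ext n t j)
            - (A km t * A j t).trace * (-(if j = kk then (1:ℂ) else 0)))
            / (t m - ext n t j)^2 := by
    intro j hj
    rw [fderiv_div_apply' (hNd j) (hDend j) (hbj j (Finset.mem_filter.mp hj).2), hDenv j]
  rw [Finset.sum_congr rfl hstep]
  have hkkF : kk ∈ Finset.univ.filter (fun j : Fin (n+2) => j ≠ km) := by simp [hne]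
  rw [← Finset.add_sum_erase _ _ hkkF, ← hS2]
  -- the kk term
  have hTkk : (fderiv ℂ (fun s => (A km s * A kk s).trace) t (Pi.single k 1)
        * (t m - ext n t kk)
        - (A km t * A kk t).trace * (-(if kk = kk then (1:ℂ) else 0)))
        / (t m - ext n t kk)^2
      = (A kk t * A km t).trace / (t k - t m)^2
        + ∑ j ∈ S2, (t k - ext n t j)⁻¹
            * (A km t * (A j t * A kk t - A kk t * A j t)).trace / (t m - t k) := by
    rw [if_pos rfl, ekk, hNkk, hYDkk, Matrix.trace_mul_comm (A km t) (A kk t),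
      ← Finset.sum_div]
    generalize (∑ j ∈ S2, (t k - ext n t j)⁻¹
      * (A km t * (A j t * A kk t - A kk t * A j t)).trace) = S
    field_simp [hab, hba]
    ring
  -- the other terms
  have hTj : ∀ j ∈ S2,
      (fderiv ℂ (fun s => (A km s * A j s).trace) t (Pi.single k 1) * (t m - ext n t j)
        - (A km t * A j t).trace * (-(if j = kk then (1:ℂ) else 0)))
        / (t m - ext n t j)^2
      = -((t k - ext n t j)⁻¹
          * (A km t * (A j t * A kk t - A kk t * A j t)).trace / (t m - t k)) := by
    intro j hj
    obtain ⟨hjkk, hjkm⟩ := hS2mem j hj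
    rw [if_neg hjkk, hNj j hjkk, tr_id2 (A kk t) (A km t) (A j t),
      tr_id3 (A kk t) (A km t) (A j t)]
    have h1 := haj j hjkk
    have h2 := hbj j hjkm
    field_simp
    ring
  rw [hTkk, Finset.sum_congr rfl hTj]
  rw [Finset.sum_neg_distrib]
  ring
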